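/- Let E be a finite-dimensional real normed vector space, let Y be a real Banach space, and let K ⊆ E be a compact convex set. Let F : E → Y be continuously differentiable (of class C¹). Assume that the restriction of F to K is injective and that for every x ∈ K the Fréchet derivative DF(x) : E → Y is an injective linear map. Then there exists a constant S > 0 such that ‖x − x'‖ ≤ S · ‖F(x) − F(x')‖ for all x, x' ∈ K. -/

import Mathlib

open Filter Topology

/-- The Lipschitz-stability-from-injectivity principle (Bourgeois;
Alberti–Arroyo–Santacesaria) underlying Proposition 3.2: a `C¹` map `F` on a
finite-dimensional space that is injective on a compact convex set `K` and has
injective derivative at every point of `K` satisfies a Lipschitz stability estimate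
on `K`. -/
theorem stmt5 {E Y : Type*} [NormedAddCommGroup E] [NormedSpace ℝ E]
    [FiniteDimensional ℝ E] [NormedAddCommGroup Y] [NormedSpace ℝ Y]
    [CompleteSpace Y]
    (K : Set E) (hKcomp : IsCompact K) (hKconv : Convex ℝ K)
    (F : E → Y) (hF : ContDiff ℝ 1 F)
    (hFinj : Set.InjOn F K)
    (hDFinj : ∀ x ∈ K, Function.Injective (fderiv ℝ F x)) :
    ∃ S > (0 : ℝ), ∀ x ∈ K, ∀ x' ∈ K, ‖x - x'‖ ≤ S * ‖F x - F x'‖ := by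
  by_contra hcon
  push_neg at hcon
  have hFd : Differentiable ℝ F := hF.differentiable one_ne_zero
  have hFc : Continuous F := hF.continuous
  have hfdc : Continuous (fderiv ℝ F) := hF.continuous_fderiv one_ne_zero
  -- extract sequences
  have key : ∀ n : ℕ, ∃ x ∈ K, ∃ y ∈ K, ((n : ℝ) + 1) * ‖F x - F y‖ < ‖x - y‖ := by
    intro n
    obtain ⟨x, hx, y, hy, h⟩ := hcon ((n : ℝ) + 1) (by positivity)
    exact ⟨x, hx, y, hy, h⟩
  choose x hx y hy hlt using key
  obtain ⟨a, haK, φ₁, hφ₁, hxa⟩ := hKcomp.tendsto_subseq (x := x) hx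
  obtain ⟨b, hbK, φ₂, hφ₂, hyb⟩ :=
    hKcomp.tendsto_subseq (x := fun n => y (φ₁ n)) fun n => hy _
  set σ : ℕ → ℕ := φ₁ ∘ φ₂ with hσdef
  have hσmono : StrictMono σ := hφ₁.comp hφ₂
  have hxa' : Tendsto (fun n => x (σ n)) atTop (𝓝 a) := hxa.comp hφ₂.tendsto_atTop
  have hyb' : Tendsto (fun n => y (σ n)) atTop (𝓝 b) := hyb
  -- diameter bound
  obtain ⟨R, hR⟩ := hKcomp.isBounded.subset_closedBall 0
  have hdiam : ∀ p ∈ K, ∀ q ∈ K, ‖p - q‖ ≤ 2 * R := by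
    intro p hp q hq
    have h1 : ‖p‖ ≤ R := by simpa [dist_eq_norm] using hR hp
    have h2 : ‖q‖ ≤ R := by simpa [dist_eq_norm] using hR hq
    calc ‖p - q‖ ≤ ‖p‖ + ‖q‖ := norm_sub_le _ _
      _ ≤ 2 * R := by linarith
  -- F a = F b, hence a = b
  have hσtop : Tendsto (fun n => ((σ n : ℝ) + 1)) atTop atTop :=
    tendsto_atTop_add_const_right _ _
      (tendsto_natCast_atTop_atTop.comp hσmono.tendsto_atTop)
  have hFn0 : Tendsto (fun n => ‖F (x (σ n)) - F (y (σ n))‖) atTop (𝓝 0) := by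
    have hub : ∀ n, ‖F (x (σ n)) - F (y (σ n))‖ ≤ (2 * R) / ((σ n : ℝ) + 1) := by
      intro n
      have h1 := hlt (σ n)
      have h2 := hdiam _ (hx (σ n)) _ (hy (σ n))
      have hpos : (0 : ℝ) < (σ n : ℝ) + 1 := by positivity
      rw [le_div_iff₀ hpos]
      nlinarith
    have hlim : Tendsto (fun n => (2 * R) / ((σ n : ℝ) + 1)) atTop (𝓝 0) :=
      Tendsto.div_atTop tendsto_const_nhds hσtop
    exact squeeze_zero (fun n => norm_nonneg _) hub hlim
  have hFab : F a = F b := by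
    have h1 : Tendsto (fun n => ‖F (x (σ n)) - F (y (σ n))‖) atTop (𝓝 ‖F a - F b‖) :=
      (((hFc.tendsto a).comp hxa').sub ((hFc.tendsto b).comp hyb')).norm
    have := tendsto_nhds_unique h1 hFn0
    rwa [norm_eq_zero, sub_eq_zero] at this
  have hab : a = b := hFinj haK hbK hFab
  have hyb'' : Tendsto (fun n => y (σ n)) atTop (𝓝 a) := hab ▸ hyb'
  -- unit vectors
  have hne : ∀ n, x n - y n ≠ 0 := by
    intro n h
    have h1 := hlt n
    rw [h, norm_zero] at h1
    have : (0 : ℝ) ≤ ((n : ℝ) + 1) * ‖F (x n) - F (y n)‖ := by positivity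
    linarith
  set v : ℕ → E := fun n => ‖x (σ n) - y (σ n)‖⁻¹ • (x (σ n) - y (σ n)) with hvdef
  have hvmem : ∀ n, v n ∈ Metric.sphere (0 : E) 1 := by
    intro n
    rw [mem_sphere_zero_iff_norm]
    exact norm_smul_inv_norm (hne (σ n))
  obtain ⟨w, hw, ψ, hψ, hvw⟩ := (isCompact_sphere (0 : E) 1).tendsto_subseq hvmem
  have hwnorm : ‖w‖ = 1 := mem_sphere_zero_iff_norm.mp hw
  set A : E →L[ℝ] Y := fderiv ℝ F a with hAdef
  -- continuity of the derivative at a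
  have hcontA : ∀ ε > (0 : ℝ), ∃ δ > (0 : ℝ), ∀ z ∈ Metric.ball a δ,
      ‖fderiv ℝ F z - A‖ ≤ ε := by
    intro ε hε
    obtain ⟨δ, hδ, hδ'⟩ := Metric.continuousAt_iff.mp hfdc.continuousAt ε hε
    exact ⟨δ, hδ, fun z hz => le_of_lt (by
      simpa [dist_eq_norm] using hδ' (Metric.mem_ball.mp hz))⟩
  have hAvw : Tendsto (fun n => ‖A (v (ψ n))‖) atTop (𝓝 ‖A w‖) :=
    ((A.continuous.tendsto w).comp hvw).norm
  have hle : ∀ ε > (0 : ℝ), ‖A w‖ ≤ ε := by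
    intro ε hε
    obtain ⟨δ, hδ, hδb⟩ := hcontA (ε / 2) (by positivity)
    have h1 : ∀ᶠ n in atTop, x (σ (ψ n)) ∈ Metric.ball a δ :=
      (hxa'.comp hψ.tendsto_atTop) (Metric.ball_mem_nhds a hδ)
    have h2 : ∀ᶠ n in atTop, y (σ (ψ n)) ∈ Metric.ball a δ :=
      (hyb''.comp hψ.tendsto_atTop) (Metric.ball_mem_nhds a hδ)
    have h3 : ∀ᶠ n in atTop, (1 : ℝ) / ((σ (ψ n) : ℝ) + 1) ≤ ε / 2 := by
      have : Tendsto (fun n => ((σ (ψ n) : ℝ) + 1)) atTop atTop :=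
        hσtop.comp hψ.tendsto_atTop
      filter_upwards [this.eventually_ge_atTop (2 / ε)] with n hn
      rw [div_le_iff₀ (by positivity)]
      calc (1 : ℝ) = ε / 2 * (2 / ε) := by field_simp
        _ ≤ ε / 2 * ((σ (ψ n) : ℝ) + 1) := by
            apply mul_le_mul_of_nonneg_left hn (by positivity)
    refine le_of_tendsto hAvw ?_
    filter_upwards [h1, h2, h3] with n hn1 hn2 hn3
    set m := σ (ψ n)
    set p := x m
    set q := y m
    have hdne : p - q ≠ 0 := hne m
    have hdpos : (0 : ℝ) < ‖p - q‖ := norm_pos_iff.mpr hdne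
    have mv : ‖F p - F q - A (p - q)‖ ≤ ε / 2 * ‖p - q‖ :=
      (convex_ball a δ).norm_image_sub_le_of_norm_fderiv_le'
        (fun z _ => hFd z) hδb hn2 hn1
    have hA1 : ‖A (p - q)‖ ≤ ‖F p - F q‖ + ε / 2 * ‖p - q‖ := by
      calc ‖A (p - q)‖ = ‖(F p - F q) - (F p - F q - A (p - q))‖ := by
            congr 1; abel
        _ ≤ ‖F p - F q‖ + ‖F p - F q - A (p - q)‖ := norm_sub_le _ _
        _ ≤ ‖F p - F q‖ + ε / 2 * ‖p - q‖ := by linarith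
    have hFdiv : ‖F p - F q‖ / ‖p - q‖ ≤ 1 / ((m : ℝ) + 1) := by
      rw [div_le_div_iff₀ hdpos (by positivity)]
      have := hlt m
      nlinarith
    have hAv : ‖A (v (ψ n))‖ = ‖A (p - q)‖ / ‖p - q‖ := by
      rw [hvdef]
      simp only [map_smul, norm_smul, norm_inv, norm_norm]
      rw [div_eq_inv_mul]
    rw [hAv]
    calc ‖A (p - q)‖ / ‖p - q‖ ≤ (‖F p - F q‖ + ε / 2 * ‖p - q‖) / ‖p - q‖ := by
          gcongr
      _ = ‖F p - F q‖ / ‖p - q‖ + ε / 2 := by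
          rw [add_div, mul_div_assoc, div_self hdpos.ne', mul_one]
      _ ≤ 1 / ((m : ℝ) + 1) + ε / 2 := by linarith
      _ ≤ ε / 2 + ε / 2 := by linarith
      _ = ε := by ring
  have hAw0 : A w = 0 := by
    have h0 : ‖A w‖ ≤ 0 := le_of_forall_pos_le_add fun ε hε => by
      simpa using hle ε hε
    simpa [norm_le_zero_iff] using h0
  have hw0 : w = 0 := hDFinj a haK (by rw [hAw0, map_zero])
  rw [hw0, norm_zero] at hwnorm
  exact one_ne_zero hwnorm.symm
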